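/- arXiv:1807.08573 — 2 statements merged into one kernel-verified Lean document; each statement's English description precedes it below -/
import Mathlib

section
/- Every entropic vector is a polymatroid: for every joint pmf p ∈ 𝒫, the set function f(α) = H(p_α) (with f(∅) = 0) satisfies (i) f(α) ≥ 0 for all α; (ii) monotonicity: α ⊆ β ⟹ H(p_α) ≤ H(p_β); and (iii) submodularity: H(p_{α∪β}) + H(p_{α∩β}) ≤ H(p_α) + H(p_β) for all α, β ⊆ {1,…,n}. -/
noncomputable section

/-- A probability mass function on a finite type. -/
def IsPmf {Ω : Type*} [Fintype Ω] (p : Ω → ℝ) : Prop :=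
  (∀ x, 0 ≤ p x) ∧ ∑ x, p x = 1

open Classical in
/-- The marginal pmf of a joint pmf `p` on the coordinates in `α`. -/
noncomputable def marginal {n : ℕ} (X : Fin n → Type) [∀ i, Fintype (X i)]
    (p : (∀ i, X i) → ℝ) (α : Finset (Fin n)) : ((i : α) → X i.1) → ℝ :=
  fun y => ∑ x : ∀ i, X i, if (∀ i : {i // i ∈ α}, x i.1 = y i) then p x else 0

/-- Shannon entropy of a pmf on a finite type (convention `0 * log 0 = 0`). -/
noncomputable def entropy {Ω : Type*} [Fintype Ω] (q : Ω → ℝ) : ℝ :=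
  -∑ x, q x * Real.log (q x)

open Finset Classical

section Helpers

variable {n : ℕ} (X : Fin n → Type) [∀ i, Fintype (X i)]

theorem sum_marginal_mul (p : (∀ i, X i) → ℝ) (α : Finset (Fin n))
    (g : ((i : α) → X i.1) → ℝ) :
    ∑ y, marginal X p α y * g y = ∑ x, p x * g (fun i => x i.1) := by
  unfold marginal
  simp_rw [Finset.sum_mul, ite_mul, zero_mul]
  rw [Finset.sum_comm]
  refine Finset.sum_congr rfl fun x _ => ?_
  have h : ∀ y : (i : α) → X i.1,
      (∀ i : {i // i ∈ α}, x i.1 = y i) ↔ ((fun i : {i // i ∈ α} => x i.1) = y) :=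
    fun y => funext_iff.symm
  calc ∑ y : (i : α) → X i.1, (if (∀ i : {i // i ∈ α}, x i.1 = y i) then p x * g y else 0 : ℝ)
      = ∑ y : (i : α) → X i.1,
          (if ((fun i : {i // i ∈ α} => x i.1) = y) then p x * g y else 0 : ℝ) := by
        refine Finset.sum_congr rfl fun y _ => ?_
        rw [if_congr (h y) rfl rfl]
    _ = p x * g (fun i => x i.1) := by rw [Finset.sum_ite_eq]; simp

theorem marginal_nonneg (p : (∀ i, X i) → ℝ) (hp : IsPmf p) (α : Finset (Fin n))
    (y : (i : α) → X i.1) : 0 ≤ marginal X p α y := by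
  unfold marginal
  refine Finset.sum_nonneg fun x _ => ?_
  split
  · exact hp.1 x
  · exact le_refl 0

theorem sum_marginal (p : (∀ i, X i) → ℝ) (hp : IsPmf p) (α : Finset (Fin n)) :
    ∑ y, marginal X p α y = 1 := by
  have := sum_marginal_mul X p α (fun _ => 1)
  simpa [hp.2] using this

theorem marginal_le_one (p : (∀ i, X i) → ℝ) (hp : IsPmf p) (α : Finset (Fin n))
    (y : (i : α) → X i.1) : marginal X p α y ≤ 1 := by
  rw [← sum_marginal X p hp α]
  exact Finset.single_le_sum (fun z _ => marginal_nonneg X p hp α z) (mem_univ y)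

theorem entropy_marginal (p : (∀ i, X i) → ℝ) (α : Finset (Fin n)) :
    entropy (marginal X p α) =
      -∑ x, p x * Real.log (marginal X p α (fun i => x i.1)) := by
  unfold entropy
  rw [sum_marginal_mul]

theorem self_le_marginal (p : (∀ i, X i) → ℝ) (hp : IsPmf p) (α : Finset (Fin n))
    (x : ∀ i, X i) : p x ≤ marginal X p α (fun i => x i.1) := by
  unfold marginal
  have h := Finset.single_le_sum
    (f := fun x' => (if (∀ i : {i // i ∈ α}, x' i.1 = x i.1) then p x' else 0 : ℝ))
    (fun x' _ => by split <;> simp [hp.1]) (mem_univ x)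
  simpa using h

theorem marginal_anti (p : (∀ i, X i) → ℝ) (hp : IsPmf p) {γ α : Finset (Fin n)}
    (hγα : γ ⊆ α) (z : (i : α) → X i.1) :
    marginal X p α z ≤ marginal X p γ (fun i : {i // i ∈ γ} => z ⟨i.1, hγα i.2⟩) := by
  unfold marginal
  refine Finset.sum_le_sum fun x _ => ?_
  split_ifs with h1 h2
  · rfl
  · exact absurd (fun i : {i // i ∈ γ} => h1 ⟨i.1, hγα i.2⟩) h2
  · exact hp.1 x
  · rfl

theorem fiber_sum (p : (∀ i, X i) → ℝ) (α β : Finset (Fin n)) (z : (i : α) → X i.1) :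
    ∑ y : (i : {i // i ∈ α ∪ β}) → X i.1,
      (if (fun i : {i // i ∈ α} => y ⟨i.1, mem_union_left β i.2⟩) = z
       then marginal X p β (fun i : {i // i ∈ β} => y ⟨i.1, mem_union_right α i.2⟩) else 0 : ℝ)
    = marginal X p (α ∩ β)
        (fun i : {i // i ∈ α ∩ β} => z ⟨i.1, mem_of_mem_inter_left i.2⟩) := by
  unfold marginal
  rw [show ∑ y : (i : {i // i ∈ α ∪ β}) → X i.1,
      (if (fun i : {i // i ∈ α} => y ⟨i.1, mem_union_left β i.2⟩) = z
       then ∑ x : ∀ i, X i,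
          (if (∀ i : {i // i ∈ β}, x i.1 = y ⟨i.1, mem_union_right α i.2⟩) then p x else 0 : ℝ)
       else 0 : ℝ)
      = ∑ x : ∀ i, X i, ∑ y : (i : {i // i ∈ α ∪ β}) → X i.1,
        (if (fun i : {i // i ∈ α} => y ⟨i.1, mem_union_left β i.2⟩) = z
          then (if (∀ i : {i // i ∈ β}, x i.1 = y ⟨i.1, mem_union_right α i.2⟩)
                then p x else 0 : ℝ) else 0 : ℝ) from by
    rw [Finset.sum_comm]
    refine Finset.sum_congr rfl fun y _ => ?_
    split <;> simp]
  refine Finset.sum_congr rfl fun x _ => ?_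
  set y₀ : (i : {i // i ∈ α ∪ β}) → X i.1 :=
    fun j => if h : j.1 ∈ α then z ⟨j.1, h⟩ else x j.1 with hy₀
  have key : ∀ y : (i : {i // i ∈ α ∪ β}) → X i.1,
      (((fun i : {i // i ∈ α} => y ⟨i.1, mem_union_left β i.2⟩) = z) ∧
        (∀ i : {i // i ∈ β}, x i.1 = y ⟨i.1, mem_union_right α i.2⟩))
      ↔ ((∀ i : {i // i ∈ α ∩ β}, x i.1 = z ⟨i.1, mem_of_mem_inter_left i.2⟩) ∧ y = y₀) := by
    intro y
    constructor
    · rintro ⟨h1, h2⟩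
      constructor
      · intro i
        have hiα : i.1 ∈ α := mem_of_mem_inter_left i.2
        have hiβ : i.1 ∈ β := mem_of_mem_inter_right i.2
        calc x i.1 = y ⟨i.1, mem_union_right α hiβ⟩ := h2 ⟨i.1, hiβ⟩
          _ = z ⟨i.1, hiα⟩ := congrFun h1 ⟨i.1, hiα⟩
      · funext j
        by_cases hj : j.1 ∈ α
        · have h := congrFun h1 ⟨j.1, hj⟩
          rw [hy₀]; dsimp only; rw [dif_pos hj]
          exact h
        · have hjβ : j.1 ∈ β := (mem_union.mp j.2).resolve_left hj
          rw [hy₀]; dsimp only; rw [dif_neg hj]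
          exact (h2 ⟨j.1, hjβ⟩).symm
    · rintro ⟨hD, rfl⟩
      constructor
      · funext i
        rw [hy₀]; dsimp only; rw [dif_pos i.2]
      · intro i
        rw [hy₀]; dsimp only
        by_cases h : i.1 ∈ α
        · rw [dif_pos h]
          exact hD ⟨i.1, mem_inter.mpr ⟨h, i.2⟩⟩
        · rw [dif_neg h]
  calc ∑ y : (i : {i // i ∈ α ∪ β}) → X i.1,
        (if (fun i : {i // i ∈ α} => y ⟨i.1, mem_union_left β i.2⟩) = z
          then (if (∀ i : {i // i ∈ β}, x i.1 = y ⟨i.1, mem_union_right α i.2⟩)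
                then p x else 0 : ℝ) else 0 : ℝ)
      = ∑ y : (i : {i // i ∈ α ∪ β}) → X i.1,
        (if ((∀ i : {i // i ∈ α ∩ β}, x i.1 = z ⟨i.1, mem_of_mem_inter_left i.2⟩) ∧ y = y₀)
          then p x else 0 : ℝ) := by
        refine Finset.sum_congr rfl fun y _ => ?_
        rw [← ite_and, if_congr (key y) rfl rfl]
    _ = (if (∀ i : {i // i ∈ α ∩ β}, x i.1 = z ⟨i.1, mem_of_mem_inter_left i.2⟩)
          then p x else 0 : ℝ) := by
        by_cases hD : (∀ i : {i // i ∈ α ∩ β}, x i.1 = z ⟨i.1, mem_of_mem_inter_left i.2⟩)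
        · rw [if_pos hD]
          have h' : ∀ y : (i : {i // i ∈ α ∪ β}) → X i.1,
              (if ((∀ i : {i // i ∈ α ∩ β}, x i.1 = z ⟨i.1, mem_of_mem_inter_left i.2⟩) ∧
                    y = y₀) then p x else 0 : ℝ)
              = (if y = y₀ then p x else 0 : ℝ) := fun y => by
            rw [if_congr (and_iff_right hD) rfl rfl]
          rw [Finset.sum_congr rfl fun y _ => h' y,
            Finset.sum_ite_eq' Finset.univ y₀ fun _ => p x, if_pos (mem_univ y₀)]
        · rw [if_neg hD]
          exact Finset.sum_eq_zero fun y _ => if_neg (fun h => hD h.1)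

theorem core (p : (∀ i, X i) → ℝ) (hp : IsPmf p) (α β : Finset (Fin n)) :
    ∑ y : (i : {i // i ∈ α ∪ β}) → X i.1,
      marginal X p α (fun i : {i // i ∈ α} => y ⟨i.1, mem_union_left β i.2⟩) *
        marginal X p β (fun i : {i // i ∈ β} => y ⟨i.1, mem_union_right α i.2⟩) /
        marginal X p (α ∩ β)
          (fun i : {i // i ∈ α ∩ β} => y ⟨i.1, mem_union_left β (mem_of_mem_inter_left i.2)⟩)
      ≤ 1 := by
  set f : ((i : {i // i ∈ α ∪ β}) → X i.1) → ℝ := fun y =>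
    marginal X p α (fun i : {i // i ∈ α} => y ⟨i.1, mem_union_left β i.2⟩) *
      marginal X p β (fun i : {i // i ∈ β} => y ⟨i.1, mem_union_right α i.2⟩) /
      marginal X p (α ∩ β)
        (fun i : {i // i ∈ α ∩ β} => y ⟨i.1, mem_union_left β (mem_of_mem_inter_left i.2)⟩)
    with hf
  calc ∑ y, f y
      = ∑ y, ∑ z : (i : {i // i ∈ α}) → X i.1,
          (if (fun i : {i // i ∈ α} => y ⟨i.1, mem_union_left β i.2⟩) = z then f y else 0 : ℝ) := by
        refine Finset.sum_congr rfl fun y _ => ?_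
        rw [Finset.sum_ite_eq, if_pos (mem_univ _)]
    _ = ∑ z : (i : {i // i ∈ α}) → X i.1, ∑ y,
          (if (fun i : {i // i ∈ α} => y ⟨i.1, mem_union_left β i.2⟩) = z then f y else 0 : ℝ) :=
        Finset.sum_comm
    _ ≤ ∑ z : (i : {i // i ∈ α}) → X i.1, marginal X p α z := by
        refine Finset.sum_le_sum fun z _ => ?_
        have step : ∀ y : (i : {i // i ∈ α ∪ β}) → X i.1,
            (if (fun i : {i // i ∈ α} => y ⟨i.1, mem_union_left β i.2⟩) = z then f y else 0 : ℝ)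
            = (marginal X p α z /
                marginal X p (α ∩ β)
                  (fun i : {i // i ∈ α ∩ β} => z ⟨i.1, mem_of_mem_inter_left i.2⟩)) *
              (if (fun i : {i // i ∈ α} => y ⟨i.1, mem_union_left β i.2⟩) = z
                then marginal X p β (fun i : {i // i ∈ β} => y ⟨i.1, mem_union_right α i.2⟩)
                else 0 : ℝ) := by
          intro y
          by_cases hc : (fun i : {i // i ∈ α} => y ⟨i.1, mem_union_left β i.2⟩) = z
          · rw [if_pos hc, if_pos hc, hf]
            have hW : (fun i : {i // i ∈ α ∩ β} =>
                y ⟨i.1, mem_union_left β (mem_of_mem_inter_left i.2)⟩)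
                = (fun i : {i // i ∈ α ∩ β} => z ⟨i.1, mem_of_mem_inter_left i.2⟩) := by
              funext i
              exact congrFun hc ⟨i.1, mem_of_mem_inter_left i.2⟩
            dsimp only
            rw [hc, hW, mul_div_right_comm]
          · rw [if_neg hc, if_neg hc, mul_zero]
        rw [Finset.sum_congr rfl fun y _ => step y, ← Finset.mul_sum, fiber_sum X p α β z]
        rcases eq_or_ne (marginal X p (α ∩ β)
            (fun i : {i // i ∈ α ∩ β} => z ⟨i.1, mem_of_mem_inter_left i.2⟩)) 0 with h | h
        · rw [h, mul_zero]
          exact marginal_nonneg X p hp α z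
        · rw [div_mul_cancel₀ _ h]
    _ = 1 := sum_marginal X p hp α

theorem sum_p_ratio_le_one (p : (∀ i, X i) → ℝ) (hp : IsPmf p) (α β : Finset (Fin n)) :
    ∑ x, p x * (marginal X p α (fun i : {i // i ∈ α} => x i.1) *
        marginal X p β (fun i : {i // i ∈ β} => x i.1) /
        (marginal X p (α ∪ β) (fun i : {i // i ∈ α ∪ β} => x i.1) *
          marginal X p (α ∩ β) (fun i : {i // i ∈ α ∩ β} => x i.1))) ≤ 1 := by
  have hrw := sum_marginal_mul X p (α ∪ β) (fun y : (i : {i // i ∈ α ∪ β}) → X i.1 =>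
    marginal X p α (fun i : {i // i ∈ α} => y ⟨i.1, mem_union_left β i.2⟩) *
      marginal X p β (fun i : {i // i ∈ β} => y ⟨i.1, mem_union_right α i.2⟩) /
      (marginal X p (α ∪ β) y *
        marginal X p (α ∩ β) (fun i : {i // i ∈ α ∩ β} =>
          y ⟨i.1, mem_union_left β (mem_of_mem_inter_left i.2)⟩)))
  rw [← hrw]
  refine le_trans (Finset.sum_le_sum fun y _ => ?_) (core X p hp α β)
  rcases eq_or_ne (marginal X p (α ∪ β) y) 0 with h | h
  · rw [h, zero_mul]
    refine div_nonneg (mul_nonneg ?_ ?_) ?_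
    · exact marginal_nonneg X p hp α _
    · exact marginal_nonneg X p hp β _
    · exact marginal_nonneg X p hp (α ∩ β) _
  · rw [← mul_div_assoc, mul_div_mul_left _ _ h]

theorem gibbs_aux {ι : Type*} [Fintype ι] (pr A B U W : ι → ℝ)
    (h0 : ∀ x, 0 ≤ pr x)
    (hpos : ∀ x, 0 < pr x → 0 < A x ∧ 0 < B x ∧ 0 < U x ∧ 0 < W x)
    (h1 : ∑ x, pr x = 1)
    (h2 : ∑ x, pr x * (A x * B x / (U x * W x)) ≤ 1) :
    (-∑ x, pr x * Real.log (U x)) + (-∑ x, pr x * Real.log (W x)) ≤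
      (-∑ x, pr x * Real.log (A x)) + (-∑ x, pr x * Real.log (B x)) := by
  have key : ∑ x, pr x * (Real.log (A x) + Real.log (B x)
      - Real.log (U x) - Real.log (W x)) ≤ 0 := by
    have step1 : ∑ x, pr x * (Real.log (A x) + Real.log (B x)
        - Real.log (U x) - Real.log (W x))
        ≤ ∑ x, pr x * (A x * B x / (U x * W x) - 1) := by
      refine Finset.sum_le_sum fun x _ => ?_
      rcases eq_or_lt_of_le (h0 x) with h | h
      · rw [← h]; simp
      · refine mul_le_mul_of_nonneg_left ?_ h.le
        obtain ⟨hAx, hBx, hUx, hWx⟩ := hpos x h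
        have hlog : Real.log (A x) + Real.log (B x) - Real.log (U x) - Real.log (W x)
            = Real.log (A x * B x / (U x * W x)) := by
          rw [Real.log_div (mul_pos hAx hBx).ne' (mul_pos hUx hWx).ne',
            Real.log_mul hAx.ne' hBx.ne', Real.log_mul hUx.ne' hWx.ne']
          ring
        rw [hlog]
        exact Real.log_le_sub_one_of_pos (div_pos (mul_pos hAx hBx) (mul_pos hUx hWx))
    have step2 : ∑ x, pr x * (A x * B x / (U x * W x) - 1)
        = (∑ x, pr x * (A x * B x / (U x * W x))) - 1 := by
      simp_rw [mul_sub, mul_one]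
      rw [Finset.sum_sub_distrib, h1]
    linarith
  have expand : ∑ x, pr x * (Real.log (A x) + Real.log (B x)
      - Real.log (U x) - Real.log (W x))
      = (∑ x, pr x * Real.log (A x)) + (∑ x, pr x * Real.log (B x))
        - (∑ x, pr x * Real.log (U x)) - (∑ x, pr x * Real.log (W x)) := by
    simp_rw [mul_sub, mul_add]
    rw [Finset.sum_sub_distrib, Finset.sum_sub_distrib, Finset.sum_add_distrib]
  linarith

end Helpers

/-- Every entropic vector is a polymatroid: the set function `α ↦ H(p_α)` vanishes at `∅`,
is nonnegative, monotone and submodular. -/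
theorem entropy_isPolymatroid {n : ℕ} (hn : 1 ≤ n)
    (X : Fin n → Type) [∀ i, Fintype (X i)] [∀ i, Nonempty (X i)]
    (p : (∀ i, X i) → ℝ) (hp : IsPmf p) :
    entropy (marginal X p ∅) = 0 ∧
    (∀ α : Finset (Fin n), 0 ≤ entropy (marginal X p α)) ∧
    (∀ α β : Finset (Fin n), α ⊆ β →
      entropy (marginal X p α) ≤ entropy (marginal X p β)) ∧
    (∀ α β : Finset (Fin n),
      entropy (marginal X p (α ∪ β)) + entropy (marginal X p (α ∩ β)) ≤
        entropy (marginal X p α) + entropy (marginal X p β)) := by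
  refine ⟨?_, ?_, ?_, ?_⟩
  · -- entropy of the empty marginal is 0
    have hm : ∀ y : (i : (∅ : Finset (Fin n))) → X i.1, marginal X p ∅ y = 1 := by
      intro y
      unfold marginal
      have hv : ∀ x : ∀ i, X i, (∀ i : {i // i ∈ (∅ : Finset (Fin n))}, x i.1 = y i) :=
        fun x i => absurd i.2 (Finset.notMem_empty _)
      rw [Finset.sum_congr rfl fun x _ => if_pos (hv x)]
      exact hp.2
    unfold entropy
    rw [Finset.sum_congr rfl fun y _ => by rw [hm y, Real.log_one, mul_zero]]
    simp
  · -- nonnegativity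
    intro α
    unfold entropy
    rw [neg_nonneg]
    refine Finset.sum_nonpos fun y _ => ?_
    exact mul_nonpos_iff.mpr (Or.inl ⟨marginal_nonneg X p hp α y,
      Real.log_nonpos (marginal_nonneg X p hp α y) (marginal_le_one X p hp α y)⟩)
  · -- monotonicity
    intro α β hαβ
    rw [entropy_marginal, entropy_marginal]
    refine neg_le_neg (Finset.sum_le_sum fun x _ => ?_)
    rcases eq_or_lt_of_le (hp.1 x) with h | h
    · rw [← h]; simp
    · refine mul_le_mul_of_nonneg_left ?_ h.le
      refine Real.log_le_log (h.trans_le (self_le_marginal X p hp β x)) ?_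
      exact marginal_anti X p hp hαβ (fun i => x i.1)
  · -- submodularity
    intro α β
    rw [entropy_marginal, entropy_marginal, entropy_marginal, entropy_marginal]
    refine gibbs_aux p
      (fun x => marginal X p α (fun i : {i // i ∈ α} => x i.1))
      (fun x => marginal X p β (fun i : {i // i ∈ β} => x i.1))
      (fun x => marginal X p (α ∪ β) (fun i : {i // i ∈ α ∪ β} => x i.1))
      (fun x => marginal X p (α ∩ β) (fun i : {i // i ∈ α ∩ β} => x i.1))
      hp.1 (fun x hx => ?_) hp.2 (sum_p_ratio_le_one X p hp α β)
    exact ⟨hx.trans_le (self_le_marginal X p hp α x),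
      hx.trans_le (self_le_marginal X p hp β x),
      hx.trans_le (self_le_marginal X p hp (α ∪ β) x),
      hx.trans_le (self_le_marginal X p hp (α ∩ β) x)⟩
end
end

section
/- The normalized distance fails the triangle inequality on polymatroids: there exist n ≥ 1 and polymatroids x, y, z on {1,…,n}, none identically zero, such that d_norm(x, y) + d_norm(y, z) < d_norm(x, z). (All the normalized distances here are well defined because any two nonzero polymatroids have strictly positive inner product.) -/
noncomputable section

/-- A polymatroid on `{1,…,n}`: a set function vanishing at `∅`, monotone and submodular. -/
def IsPolymatroid {n : ℕ} (f : Finset (Fin n) → ℝ) : Prop :=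
  f ∅ = 0 ∧ (∀ α β : Finset (Fin n), α ⊆ β → f α ≤ f β) ∧
    ∀ α β : Finset (Fin n), f (α ∪ β) + f (α ∩ β) ≤ f α + f β

/-- A polymatroid viewed as a vector in `ℝ^(2^n - 1)`, indexed by nonempty subsets. -/
noncomputable def polyVec {n : ℕ} (f : Finset (Fin n) → ℝ) :
    EuclideanSpace ℝ {α : Finset (Fin n) // α.Nonempty} :=
  WithLp.toLp 2 (fun α => f α.1)

open scoped RealInnerProductSpace

/-- The normalized distance `d_norm(x, y) = ‖x − yʹ‖ / ‖yʹ‖` where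
`yʹ = (⟪x, y⟫ / ‖y‖²) • y` is the nearest point to `x` on the ray `E_y`. -/
noncomputable def dnorm {E : Type*} [NormedAddCommGroup E] [InnerProductSpace ℝ E]
    (x y : E) : ℝ :=
  ‖x - (⟪x, y⟫ / ‖y‖ ^ 2) • y‖ / ‖(⟪x, y⟫ / ‖y‖ ^ 2) • y‖

lemma dnorm_eq' {E : Type*} [NormedAddCommGroup E] [InnerProductSpace ℝ E]
    (x y : E) (h : ⟪x, y⟫ ≠ 0) :
    dnorm x y = Real.sqrt ((‖x‖ ^ 2 * ‖y‖ ^ 2 - ⟪x, y⟫ ^ 2) / ⟪x, y⟫ ^ 2) := by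
  have hy : y ≠ 0 := fun hy0 => h (by simp [hy0])
  have hy2 : (0:ℝ) < ‖y‖ ^ 2 := by
    have := norm_pos_iff.mpr hy; positivity
  set c : ℝ := ⟪x, y⟫ / ‖y‖ ^ 2 with hc
  have h1 : ‖x - c • y‖ ^ 2 = ‖x‖ ^ 2 - ⟪x, y⟫ ^ 2 / ‖y‖ ^ 2 := by
    rw [@norm_sub_sq_real, inner_smul_right, norm_smul]
    field_simp [hc]
    rw [Real.norm_eq_abs, sq_abs, hc]
    field_simp
    ring
  have h2 : ‖c • y‖ ^ 2 = ⟪x, y⟫ ^ 2 / ‖y‖ ^ 2 := by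
    rw [norm_smul]
    field_simp [hc]
    rw [Real.norm_eq_abs, sq_abs, hc]
    field_simp
  have hnum : ‖x - c • y‖ = Real.sqrt (‖x‖ ^ 2 - ⟪x, y⟫ ^ 2 / ‖y‖ ^ 2) := by
    rw [← h1, Real.sqrt_sq (norm_nonneg _)]
  have hden : ‖c • y‖ = Real.sqrt (⟪x, y⟫ ^ 2 / ‖y‖ ^ 2) := by
    rw [← h2, Real.sqrt_sq (norm_nonneg _)]
  rw [dnorm, hnum, hden, ← Real.sqrt_div (by rw [← h1]; positivity)]
  congr 1
  field_simp

lemma ne01 : ({0}:Finset (Fin 2)) ≠ {0,1} := by decide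
lemma ne11 : ({1}:Finset (Fin 2)) ≠ {0,1} := by decide

def e3 : Fin 3 → {α : Finset (Fin 2) // α.Nonempty} :=
  ![⟨{0}, by decide⟩, ⟨{1}, by decide⟩, ⟨{0,1}, by decide⟩]

lemma e3_bij : Function.Bijective e3 := by decide

lemma inner_polyVec (f g : Finset (Fin 2) → ℝ) :
    ⟪polyVec f, polyVec g⟫ =
      f {0} * g {0} + f {1} * g {1} + f {0,1} * g {0,1} := by
  rw [PiLp.inner_apply]
  rw [← Fintype.sum_bijective e3 e3_bij _ _ (fun _ => rfl)]
  simp [Fin.sum_univ_three, e3, polyVec, RCLike.inner_apply, mul_comm]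

def xf : Finset (Fin 2) → ℝ := fun α => if α = ∅ then 0 else 1
def yf : Finset (Fin 2) → ℝ := fun α => if α = ∅ then 0 else if α = {0,1} then 3/2 else 1
def zf : Finset (Fin 2) → ℝ := fun α => if α = ∅ then 0 else if α = {0,1} then 2 else 1

lemma xf_poly : IsPolymatroid xf := by
  refine ⟨by simp [xf], ?_, ?_⟩ <;> intro α β <;>
    fin_cases α <;> fin_cases β <;>
    simp_all [xf, Finset.ext_iff, Fin.forall_fin_two, Finset.subset_iff] <;> norm_num

lemma yf_poly : IsPolymatroid yf := by
  refine ⟨by simp [yf], ?_, ?_⟩ <;> intro α β <;>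
    fin_cases α <;> fin_cases β <;>
    simp_all [yf, Finset.ext_iff, Fin.forall_fin_two, Finset.subset_iff] <;> norm_num

lemma zf_poly : IsPolymatroid zf := by
  refine ⟨by simp [zf], ?_, ?_⟩ <;> intro α β <;>
    fin_cases α <;> fin_cases β <;>
    simp_all [zf, Finset.ext_iff, Fin.forall_fin_two, Finset.subset_iff] <;> norm_num

/-- The normalized distance fails the triangle inequality on nonzero polymatroids. -/
theorem dnorm_not_triangle :
    ∃ (n : ℕ), 1 ≤ n ∧ ∃ x y z : Finset (Fin n) → ℝ,
      IsPolymatroid x ∧ IsPolymatroid y ∧ IsPolymatroid z ∧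
      (∃ α, x α ≠ 0) ∧ (∃ α, y α ≠ 0) ∧ (∃ α, z α ≠ 0) ∧
      dnorm (polyVec x) (polyVec y) + dnorm (polyVec y) (polyVec z) <
        dnorm (polyVec x) (polyVec z) := by
  refine ⟨2, by norm_num, xf, yf, zf, xf_poly, yf_poly, zf_poly,
    ⟨{0}, by norm_num [xf, ne01, ne11]⟩, ⟨{0}, by norm_num [yf, ne01, ne11]⟩, ⟨{0}, by norm_num [zf, ne01, ne11]⟩, ?_⟩
  have hxy : ⟪polyVec xf, polyVec yf⟫ = 7/2 := by
    rw [inner_polyVec]; norm_num [xf, yf, ne01, ne11]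
  have hyz : ⟪polyVec yf, polyVec zf⟫ = 5 := by
    rw [inner_polyVec]; norm_num [yf, zf, ne01, ne11]
  have hxz : ⟪polyVec xf, polyVec zf⟫ = 4 := by
    rw [inner_polyVec]; norm_num [xf, zf, ne01, ne11]
  have hxx : ‖polyVec xf‖ ^ 2 = 3 := by
    rw [← real_inner_self_eq_norm_sq, inner_polyVec]; norm_num [xf, ne01, ne11]
  have hyy : ‖polyVec yf‖ ^ 2 = 17/4 := by
    rw [← real_inner_self_eq_norm_sq, inner_polyVec]; norm_num [yf, ne01, ne11]
  have hzz : ‖polyVec zf‖ ^ 2 = 6 := by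
    rw [← real_inner_self_eq_norm_sq, inner_polyVec]; norm_num [zf, ne01, ne11]
  rw [dnorm_eq' _ _ (by rw [hxy]; norm_num),
    dnorm_eq' _ _ (by rw [hyz]; norm_num),
    dnorm_eq' _ _ (by rw [hxz]; norm_num),
    hxy, hyz, hxz, hxx, hyy, hzz]
  have e1 : ((3 * (17/4) - (7/2:ℝ) ^ 2) / (7/2) ^ 2) = 2 / 7 ^ 2 := by norm_num
  have e2 : ((17/4 * 6 - (5:ℝ) ^ 2) / 5 ^ 2) = 2 / 10 ^ 2 := by norm_num
  have e3 : ((3 * 6 - (4:ℝ) ^ 2) / 4 ^ 2) = 2 / 4 ^ 2 := by norm_num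
  rw [e1, e2, e3]
  rw [Real.sqrt_div (by norm_num), Real.sqrt_div (by norm_num),
    Real.sqrt_div (by norm_num)]
  have h7 : Real.sqrt (7 ^ 2) = 7 := by
    rw [Real.sqrt_sq]; norm_num
  have h10 : Real.sqrt (10 ^ 2) = 10 := by
    rw [Real.sqrt_sq]; norm_num
  have h4 : Real.sqrt (4 ^ 2) = 4 := by
    rw [Real.sqrt_sq]; norm_num
  rw [h7, h10, h4]
  have hs2 : 0 < Real.sqrt 2 := Real.sqrt_pos.mpr (by norm_num)
  nlinarith [hs2]
end
end
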